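/- For any point set E ⊆ 𝔽_q² and any collection 𝓛 of lines in 𝔽_q², the number of incidences I(E,𝓛) = Σ_{ℓ∈𝓛} |ℓ ∩ E| satisfies |I(E,𝓛) − |E||𝓛|/q| ≤ √(q·|E|·|𝓛|). -/

import Mathlib

open Finset
open scoped Classical

/-- An affine line in `F × F`, given as the finset of solutions of `a*x + b*y = c`
with `(a,b) ≠ (0,0)`. -/
def IsLine {F : Type*} [Field F] [Fintype F] [DecidableEq F] (ℓ : Finset (F × F)) : Prop :=
  ∃ a b c : F, (a, b) ≠ (0, 0) ∧
    ℓ = Finset.univ.filter (fun p : F × F => a * p.1 + b * p.2 = c)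

section VinhAux

variable {F : Type*} [Field F] [Fintype F] [DecidableEq F]

/-- The solution set of `a*x + b*y = c`. -/
def solSet (a b c : F) : Finset (F × F) :=
  Finset.univ.filter (fun p : F × F => a * p.1 + b * p.2 = c)

lemma card_solSet {a b c : F} (hab : (a, b) ≠ (0, 0)) :
    (solSet a b c).card = Fintype.card F := by
  by_cases hb : b = 0
  · have ha : a ≠ 0 := by
      intro h; exact hab (by rw [h, hb])
    have : solSet a b c = Finset.univ.image (fun y : F => (c / a, y)) := by
      ext ⟨x, y⟩
      simp only [solSet, Finset.mem_filter, Finset.mem_univ, true_and, Finset.mem_image, hb]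
      constructor
      · intro h
        refine ⟨y, ?_⟩
        rw [Prod.mk.injEq]
        refine ⟨?_, rfl⟩
        rw [div_eq_iff ha]
        linear_combination -h
      · rintro ⟨y', hy'⟩
        rw [Prod.mk.injEq] at hy'
        obtain ⟨h1, h2⟩ := hy'
        subst h1
        field_simp
        ring
    rw [this, Finset.card_image_of_injective _ (fun y1 y2 h => by simpa using h),
      Finset.card_univ]
  · have : solSet a b c = Finset.univ.image (fun x : F => (x, (c - a * x) / b)) := by
      ext ⟨x, y⟩
      simp only [solSet, Finset.mem_filter, Finset.mem_univ, true_and, Finset.mem_image]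
      constructor
      · intro h
        refine ⟨x, ?_⟩
        rw [Prod.mk.injEq]
        refine ⟨rfl, ?_⟩
        rw [div_eq_iff hb]
        linear_combination -h
      · rintro ⟨x', hx'⟩
        rw [Prod.mk.injEq] at hx'
        obtain ⟨h1, h2⟩ := hx'
        subst h1; subst h2
        field_simp
        ring
    rw [this, Finset.card_image_of_injective _ (fun x1 x2 h => by simpa using (congrArg Prod.fst h)),
      Finset.card_univ]

/-- A line containing two distinct points equals the parametrized line through them. -/
lemma line_eq_param {p p' : F × F} (hne : p ≠ p') {ℓ : Finset (F × F)} (hℓ : IsLine ℓ)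
    (hp : p ∈ ℓ) (hp' : p' ∈ ℓ) :
    ℓ = Finset.univ.image
      (fun t : F => (p.1 + t * (p'.1 - p.1), p.2 + t * (p'.2 - p.2))) := by
  obtain ⟨a, b, c, hab, rfl⟩ := hℓ
  simp only [Finset.mem_filter, Finset.mem_univ, true_and] at hp hp'
  have hinj : Function.Injective
      (fun t : F => (p.1 + t * (p'.1 - p.1), p.2 + t * (p'.2 - p.2))) := by
    intro t1 t2 h
    rw [Prod.mk.injEq] at h
    obtain ⟨h1, h2⟩ := h
    by_cases hx : p'.1 - p.1 = 0
    · have hy : p'.2 - p.2 ≠ 0 := by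
        intro hy
        exact hne (Prod.ext (sub_eq_zero.mp hx) (sub_eq_zero.mp hy)).symm
      exact mul_right_cancel₀ hy (by linear_combination h2)
    · exact mul_right_cancel₀ hx (by linear_combination h1)
  have hsub : Finset.univ.image
      (fun t : F => (p.1 + t * (p'.1 - p.1), p.2 + t * (p'.2 - p.2))) ⊆
      Finset.univ.filter (fun r : F × F => a * r.1 + b * r.2 = c) := by
    intro r hr
    simp only [Finset.mem_image, Finset.mem_univ, true_and] at hr
    obtain ⟨t, rfl⟩ := hr
    simp only [Finset.mem_filter, Finset.mem_univ, true_and]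
    ring_nf
    linear_combination (1 - t) * hp + t * hp'
  refine (Finset.eq_of_subset_of_card_le hsub ?_).symm
  rw [Finset.card_image_of_injective _ hinj, Finset.card_univ]
  exact le_of_eq (card_solSet hab)

lemma unique_line {p p' : F × F} (hne : p ≠ p') {ℓ₁ ℓ₂ : Finset (F × F)}
    (h1 : IsLine ℓ₁) (h2 : IsLine ℓ₂) (hp1 : p ∈ ℓ₁) (hp1' : p' ∈ ℓ₁)
    (hp2 : p ∈ ℓ₂) (hp2' : p' ∈ ℓ₂) : ℓ₁ = ℓ₂ := by
  rw [line_eq_param hne h1 hp1 hp1', line_eq_param hne h2 hp2 hp2']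

lemma exists_line {p p' : F × F} (hne : p ≠ p') :
    ∃ ℓ : Finset (F × F), IsLine ℓ ∧ p ∈ ℓ ∧ p' ∈ ℓ := by
  refine ⟨solSet (p.2 - p'.2) (p'.1 - p.1) ((p.2 - p'.2) * p.1 + (p'.1 - p.1) * p.2),
    ⟨_, _, _, ?_, rfl⟩, ?_, ?_⟩
  · intro h
    rw [Prod.mk.injEq] at h
    exact hne (Prod.ext (sub_eq_zero.mp h.2).symm (sub_eq_zero.mp h.1))
  · simp [solSet]
  · simp only [solSet, Finset.mem_filter, Finset.mem_univ, true_and]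
    ring

/-- The set of lines through two distinct points has exactly one element. -/
lemma card_lines_through_two {p p' : F × F} (hne : p ≠ p') :
    ((Finset.univ.filter IsLine).filter (fun ℓ : Finset (F × F) => p ∈ ℓ ∧ p' ∈ ℓ)).card
      = 1 := by
  obtain ⟨ℓ₀, hℓ₀, hp₀, hp₀'⟩ := exists_line hne
  rw [Finset.card_eq_one]
  refine ⟨ℓ₀, ?_⟩
  ext ℓ
  simp only [Finset.mem_filter, Finset.mem_univ, true_and, Finset.mem_singleton]
  constructor
  · rintro ⟨hL, hp, hp'⟩
    exact unique_line hne hL hℓ₀ hp hp' hp₀ hp₀'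
  · rintro rfl
    exact ⟨hℓ₀, hp₀, hp₀'⟩

/-- The number of lines through a point is `q + 1`. -/
lemma card_lines_through (p : F × F) :
    ((Finset.univ.filter IsLine).filter (fun ℓ : Finset (F × F) => p ∈ ℓ)).card
      = Fintype.card F + 1 := by
  set q := Fintype.card F with hq
  set S : Finset (F × F) := Finset.univ.filter (fun v : F × F => v ≠ (0, 0)) with hS
  set φ : F × F → Finset (F × F) :=
    fun v => solSet v.1 v.2 (v.1 * p.1 + v.2 * p.2) with hφ
  have himg : (Finset.univ.filter IsLine).filter (fun ℓ : Finset (F × F) => p ∈ ℓ)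
      = S.image φ := by
    ext ℓ
    simp only [Finset.mem_filter, Finset.mem_univ, true_and, Finset.mem_image, hS]
    constructor
    · rintro ⟨⟨a, b, c, hab, rfl⟩, hp⟩
      simp only [Finset.mem_filter, Finset.mem_univ, true_and] at hp
      refine ⟨(a, b), hab, ?_⟩
      simp only [hφ, solSet]
      rw [hp]
    · rintro ⟨v, hv0, rfl⟩
      refine ⟨⟨v.1, v.2, v.1 * p.1 + v.2 * p.2, by rwa [Prod.mk.eta], rfl⟩, ?_⟩
      simp [hφ, solSet]
  have hfiber : ∀ v ∈ S, (S.filter (fun w => φ w = φ v)).card = q - 1 := by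
    intro v hv
    have hv0 : v ≠ (0, 0) := (Finset.mem_filter.mp hv).2
    have hvor : v.1 ≠ 0 ∨ v.2 ≠ 0 := by
      by_contra h
      push_neg at h
      exact hv0 (Prod.ext h.1 h.2)
    have key : S.filter (fun w => φ w = φ v)
        = (Finset.univ.filter (fun l : F => l ≠ 0)).image (fun l => (l * v.1, l * v.2)) := by
      ext w
      simp only [Finset.mem_filter, Finset.mem_univ, true_and, Finset.mem_image, hS]
      constructor
      · rintro ⟨hw0, hφw⟩
        have hp2 : (p.1 - v.2, p.2 + v.1) ∈ φ v := by
          simp only [hφ, solSet, Finset.mem_filter, Finset.mem_univ, true_and]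
          ring
        rw [← hφw] at hp2
        simp only [hφ, solSet, Finset.mem_filter, Finset.mem_univ, true_and] at hp2
        have hrel : w.2 * v.1 = w.1 * v.2 := by linear_combination hp2
        rcases hvor with hv1 | hv2
        · have hw1 : w.1 ≠ 0 := by
            intro hw1
            have : w.2 = 0 := by
              have := hrel
              rw [hw1, zero_mul] at this
              exact (mul_eq_zero.mp this).resolve_right hv1
            exact hw0 (Prod.ext hw1 this)
          refine ⟨w.1 / v.1, div_ne_zero hw1 hv1, ?_⟩
          have h1 : w.1 / v.1 * v.1 = w.1 := div_mul_cancel₀ _ hv1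
          have h2 : w.1 / v.1 * v.2 = w.2 := by
            rw [div_mul_eq_mul_div, eq_comm, eq_div_iff hv1]
            linear_combination hrel
          rw [h1, h2]
        · have hw2 : w.2 ≠ 0 := by
            intro hw2
            have : w.1 = 0 := by
              have := hrel
              rw [hw2, zero_mul] at this
              exact (mul_eq_zero.mp this.symm).resolve_right hv2
            exact hw0 (Prod.ext this hw2)
          refine ⟨w.2 / v.2, div_ne_zero hw2 hv2, ?_⟩
          have h1 : w.2 / v.2 * v.2 = w.2 := div_mul_cancel₀ _ hv2
          have h2 : w.2 / v.2 * v.1 = w.1 := by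
            rw [div_mul_eq_mul_div, eq_comm, eq_div_iff hv2]
            linear_combination -hrel
          rw [h1, h2]
      · rintro ⟨l, hl, rfl⟩
        constructor
        · intro h
          rw [Prod.mk.injEq] at h
          have h1 : v.1 = 0 := (mul_eq_zero.mp h.1).resolve_left hl
          have h2 : v.2 = 0 := (mul_eq_zero.mp h.2).resolve_left hl
          exact hv0 (Prod.ext h1 h2)
        · ext r
          simp only [hφ, solSet, Finset.mem_filter, Finset.mem_univ, true_and]
          constructor
          · intro h
            have := mul_left_cancel₀ hl
              (show l * (v.1 * r.1 + v.2 * r.2) = l * (v.1 * p.1 + v.2 * p.2) by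
                linear_combination h)
            exact this
          · intro h
            linear_combination l * h
    rw [key, Finset.card_image_of_injOn, Finset.filter_ne', Finset.card_erase_of_mem
      (Finset.mem_univ _), Finset.card_univ, hq]
    intro l1 h1 l2 h2 h
    rw [Prod.mk.injEq] at h
    rcases hvor with hv1 | hv2
    · exact mul_right_cancel₀ hv1 h.1
    · exact mul_right_cancel₀ hv2 h.2
  have hScard : S.card = q ^ 2 - 1 := by
    rw [hS, Finset.filter_ne', Finset.card_erase_of_mem (Finset.mem_univ _),
      Finset.card_univ, Fintype.card_prod, ← hq, sq]
  have hcount : S.card = (S.image φ).card * (q - 1) := by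
    rw [Finset.card_eq_sum_card_image φ S]
    rw [Finset.sum_congr rfl (fun ℓ hℓ => ?_), Finset.sum_const, smul_eq_mul]
    obtain ⟨v, hv, rfl⟩ := Finset.mem_image.mp hℓ
    exact hfiber v hv
  have h2q : 2 ≤ q := Fintype.one_lt_card
  have hqq : (q + 1) * (q - 1) = q ^ 2 - 1 := by
    have hq1 : 1 ≤ q := by omega
    have hq2 : 1 ≤ q ^ 2 := by nlinarith
    zify [hq1, hq2]
    ring
  rw [himg]
  have hmul : (S.image φ).card * (q - 1) = (q + 1) * (q - 1) := by
    rw [hqq, ← hScard, hcount]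
  exact Nat.eq_of_mul_eq_mul_right (by omega) hmul

/-- The total number of lines is `q^2 + q`. -/
lemma card_all_lines :
    (Finset.univ.filter (IsLine (F := F))).card = Fintype.card F ^ 2 + Fintype.card F := by
  set q := Fintype.card F with hq
  set A := Finset.univ.filter (IsLine (F := F)) with hA
  have hcard : ∀ ℓ : Finset (F × F), ℓ.card = ∑ p : F × F, if p ∈ ℓ then 1 else 0 := by
    intro ℓ
    rw [← Finset.card_filter, Finset.filter_mem_eq_inter, Finset.univ_inter]
  have h1 : ∑ ℓ ∈ A, ℓ.card = A.card * q := by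
    rw [Finset.sum_congr rfl (fun ℓ hℓ => ?_), Finset.sum_const, smul_eq_mul]
    obtain ⟨a, b, c, hab, rfl⟩ := (Finset.mem_filter.mp hℓ).2
    exact card_solSet hab
  have h2 : ∑ ℓ ∈ A, ℓ.card = q * q * (q + 1) := by
    simp_rw [hcard]
    rw [Finset.sum_comm]
    rw [Finset.sum_congr rfl (fun p _ => ?_), Finset.sum_const, Finset.card_univ,
      Fintype.card_prod, smul_eq_mul, ← hq]
    rw [← Finset.card_filter]
    exact card_lines_through p
  have h2q : 2 ≤ q := Fintype.one_lt_card
  have : A.card * q = (q ^ 2 + q) * q := by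
    rw [h1] at h2
    rw [h2]
    ring
  exact Nat.eq_of_mul_eq_mul_right (by omega) this

end VinhAux

theorem vinh_point_line_incidence
    {F : Type*} [Field F] [Fintype F] [DecidableEq F] (q : ℕ) (hq : Fintype.card F = q)
    (E : Finset (F × F)) (𝓛 : Finset (Finset (F × F))) (h𝓛 : ∀ ℓ ∈ 𝓛, IsLine ℓ) :
    |(∑ ℓ ∈ 𝓛, ((ℓ ∩ E).card : ℝ)) - (E.card : ℝ) * 𝓛.card / q|
      ≤ Real.sqrt ((q : ℝ) * E.card * 𝓛.card) := by
  subst hq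
  set A := Finset.univ.filter (IsLine (F := F)) with hA
  have hsub : 𝓛 ⊆ A := fun ℓ h => Finset.mem_filter.mpr ⟨Finset.mem_univ _, h𝓛 ℓ h⟩
  have h2q : 2 ≤ Fintype.card F := Fintype.one_lt_card
  have hQ0 : (0 : ℝ) < (Fintype.card F : ℝ) := by positivity
  have hQne : (Fintype.card F : ℝ) ≠ 0 := ne_of_gt hQ0
  -- incidence counts as sums of indicators
  have hcard : ∀ ℓ : Finset (F × F), (ℓ ∩ E).card = ∑ p ∈ E, if p ∈ ℓ then 1 else 0 := by
    intro ℓ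
    rw [← Finset.card_filter, Finset.filter_mem_eq_inter, Finset.inter_comm]
  -- first moment
  have hS1 : ∑ ℓ ∈ A, (ℓ ∩ E).card = E.card * (Fintype.card F + 1) := by
    simp_rw [hcard]
    rw [Finset.sum_comm]
    rw [Finset.sum_congr rfl (fun p _ => ?_), Finset.sum_const, smul_eq_mul]
    rw [← Finset.card_filter]
    exact card_lines_through p
  -- second moment
  have hS2 : ∑ ℓ ∈ A, (ℓ ∩ E).card ^ 2 = E.card * (E.card + Fintype.card F) := by
    have expand : ∀ ℓ : Finset (F × F), (ℓ ∩ E).card ^ 2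
        = ∑ p ∈ E, ∑ p' ∈ E, (if p ∈ ℓ ∧ p' ∈ ℓ then 1 else 0) := by
      intro ℓ
      rw [hcard ℓ, sq, Finset.sum_mul_sum]
      refine Finset.sum_congr rfl fun p _ => Finset.sum_congr rfl fun p' _ => ?_
      by_cases h1 : p ∈ ℓ <;> by_cases h2 : p' ∈ ℓ <;> simp [h1, h2]
    simp_rw [expand]
    rw [Finset.sum_comm]
    rw [Finset.sum_congr rfl (fun p hp => ?_), Finset.sum_const, smul_eq_mul]
    rw [Finset.sum_comm]
    have hinner : ∀ p' ∈ E, ∑ ℓ ∈ A, (if p ∈ ℓ ∧ p' ∈ ℓ then 1 else 0)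
        = if p = p' then Fintype.card F + 1 else 1 := by
      intro p' _
      rw [← Finset.card_filter]
      by_cases hpp : p = p'
      · subst hpp
        rw [if_pos rfl, ← card_lines_through p]
        congr 1
        simp
        rw [hA]
      · rw [if_neg hpp]
        exact card_lines_through_two hpp
    rw [Finset.sum_congr rfl hinner]
    have : ∀ p' ∈ E, (if p = p' then Fintype.card F + 1 else 1)
        = 1 + (if p = p' then Fintype.card F else 0) := by
      intro p' _
      by_cases hpp : p = p' <;> simp [hpp, Nat.add_comm]
    rw [Finset.sum_congr rfl this, Finset.sum_add_distrib, Finset.sum_const, smul_eq_mul,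
      mul_one, Finset.sum_ite_eq, if_pos hp]
  -- total number of lines
  have hS0 : A.card = Fintype.card F ^ 2 + Fintype.card F := card_all_lines
  -- move to the reals
  have e1 : (∑ ℓ ∈ A, ((ℓ ∩ E).card : ℝ) ^ 2)
      = (E.card : ℝ) * (E.card + Fintype.card F) := by exact_mod_cast hS2
  have e2 : (∑ ℓ ∈ A, ((ℓ ∩ E).card : ℝ))
      = (E.card : ℝ) * (Fintype.card F + 1) := by exact_mod_cast hS1
  have e3 : (A.card : ℝ) = (Fintype.card F : ℝ) ^ 2 + Fintype.card F := by exact_mod_cast hS0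
  set m : ℝ := (E.card : ℝ) / (Fintype.card F : ℝ) with hm
  have hvar : ∑ ℓ ∈ A, (((ℓ ∩ E).card : ℝ) - m) ^ 2
      = (Fintype.card F : ℝ) * E.card - (E.card : ℝ) ^ 2 / Fintype.card F := by
    have expand : ∀ ℓ ∈ A, (((ℓ ∩ E).card : ℝ) - m) ^ 2
        = ((ℓ ∩ E).card : ℝ) ^ 2 - 2 * m * ((ℓ ∩ E).card : ℝ) + m ^ 2 := fun _ _ => by ring
    rw [Finset.sum_congr rfl expand, Finset.sum_add_distrib, Finset.sum_sub_distrib,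
      ← Finset.mul_sum, Finset.sum_const, nsmul_eq_mul, e1, e2, e3, hm]
    field_simp
    ring
  have hvar_le : ∑ ℓ ∈ A, (((ℓ ∩ E).card : ℝ) - m) ^ 2
      ≤ (Fintype.card F : ℝ) * E.card := by
    rw [hvar]
    have : (0 : ℝ) ≤ (E.card : ℝ) ^ 2 / Fintype.card F := by positivity
    linarith
  have hsum_le : ∑ ℓ ∈ 𝓛, (((ℓ ∩ E).card : ℝ) - m) ^ 2
      ≤ ∑ ℓ ∈ A, (((ℓ ∩ E).card : ℝ) - m) ^ 2 :=
    Finset.sum_le_sum_of_subset_of_nonneg hsub fun _ _ _ => sq_nonneg _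
  have hCS : (∑ ℓ ∈ 𝓛, (((ℓ ∩ E).card : ℝ) - m)) ^ 2
      ≤ (𝓛.card : ℝ) * ∑ ℓ ∈ 𝓛, (((ℓ ∩ E).card : ℝ) - m) ^ 2 :=
    sq_sum_le_card_mul_sum_sq
  have hD : (∑ ℓ ∈ 𝓛, ((ℓ ∩ E).card : ℝ)) - (E.card : ℝ) * 𝓛.card / Fintype.card F
      = ∑ ℓ ∈ 𝓛, (((ℓ ∩ E).card : ℝ) - m) := by
    rw [Finset.sum_sub_distrib, Finset.sum_const, nsmul_eq_mul, hm]
    ring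
  rw [hD, ← Real.sqrt_sq_eq_abs]
  apply Real.sqrt_le_sqrt
  calc (∑ ℓ ∈ 𝓛, (((ℓ ∩ E).card : ℝ) - m)) ^ 2
      ≤ (𝓛.card : ℝ) * ∑ ℓ ∈ 𝓛, (((ℓ ∩ E).card : ℝ) - m) ^ 2 := hCS
    _ ≤ (𝓛.card : ℝ) * ((Fintype.card F : ℝ) * E.card) := by
        apply mul_le_mul_of_nonneg_left (hsum_le.trans hvar_le) (by positivity)
    _ = (Fintype.card F : ℝ) * E.card * 𝓛.card := by ring
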